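/- Conversely, if R is a commutative ring of Krull dimension ≤ 1 (in the classical sense), then for all x₀, x₁ ∈ R there exist e₀, e₁ ∈ ℕ and c₀, c₁ ∈ R with x₀^{e₀}·(x₁^{e₁}·(1 + c₁x₁) + c₀x₀) = 0. -/

import Mathlib

theorem stmt_16 {R : Type*} [CommRing R] (h : ringKrullDim R ≤ 1) :
    ∀ x₀ x₁ : R, ∃ (e₀ e₁ : ℕ) (c₀ c₁ : R),
      x₀ ^ e₀ * (x₁ ^ e₁ * (1 + c₁ * x₁) + c₀ * x₀) = 0 := by
  intro x₀ x₁
  by_contra hc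
  push_neg at hc
  -- The set of all elements of the given shape is a submonoid M.
  set M : Submonoid R :=
    { carrier := {r | ∃ (e₀ e₁ : ℕ) (c₀ c₁ : R),
        r = x₀ ^ e₀ * (x₁ ^ e₁ * (1 + c₁ * x₁) + c₀ * x₀)}
      one_mem' := ⟨0, 0, 0, 0, by ring⟩
      mul_mem' := by
        rintro a b ⟨e, f, c, d, rfl⟩ ⟨e', f', c', d', rfl⟩
        refine ⟨e + e', f + f',
          c' * (x₁ ^ f * (1 + d * x₁)) + c * (x₁ ^ f' * (1 + d' * x₁) + c' * x₀),
          d + d' + d * d' * x₁, ?_⟩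
        ring } with hM
  have h0M : (0 : R) ∉ M := by
    rintro ⟨e₀, e₁, c₀, c₁, he⟩
    exact hc e₀ e₁ c₀ c₁ he.symm
  -- A prime p disjoint from M.
  obtain ⟨p, hp, -, hpM⟩ := Ideal.exists_le_prime_disjoint (⊥ : Ideal R) M
    (by simpa [Set.disjoint_left] using h0M)
  have hx₀M : x₀ ∈ M := ⟨1, 0, 0, 0, by ring⟩
  have hx₀p : x₀ ∉ p := fun hx => (Set.disjoint_left.mp hpM hx) hx₀M
  -- The submonoid T of elements x₁^f (1 + a x₁).
  set T : Submonoid R :=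
    { carrier := {r | ∃ (f : ℕ) (a : R), r = x₁ ^ f * (1 + a * x₁)}
      one_mem' := ⟨0, 0, by ring⟩
      mul_mem' := by
        rintro a b ⟨f, c, rfl⟩ ⟨f', c', rfl⟩
        exact ⟨f + f', c + c' + c * c' * x₁, by ring⟩ } with hT
  -- p + (x₀) is disjoint from T.
  have hdisj : Disjoint ((p ⊔ Ideal.span {x₀} : Ideal R) : Set R) (T : Set R) := by
    rw [Set.disjoint_left]
    rintro r hr ⟨f, a, rfl⟩
    rw [SetLike.mem_coe, Submodule.mem_sup] at hr
    obtain ⟨y, hy, z, hz, hyz⟩ := hr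
    obtain ⟨b, rfl⟩ := Ideal.mem_span_singleton'.mp hz
    have hyM : y ∈ M := ⟨0, f, -b, a, by
      have : y = x₁ ^ f * (1 + a * x₁) - b * x₀ := by rw [← hyz]; ring
      rw [this]; ring⟩
    exact (Set.disjoint_left.mp hpM hy) hyM
  obtain ⟨q, hq, hq1, hqT⟩ := Ideal.exists_le_prime_disjoint _ T hdisj
  have hpq : p < q := lt_of_le_of_ne (le_trans le_sup_left hq1)
    (by rintro rfl; exact hx₀p (hq1 (le_sup_right (α := Ideal R)
      (Ideal.subset_span (Set.mem_singleton x₀)))))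
  have hx₁T : x₁ ∈ T := ⟨1, 0, by ring⟩
  have hx₁q : x₁ ∉ q := fun hx => (Set.disjoint_left.mp hqT hx) hx₁T
  -- q + (x₁) is a proper ideal.
  have hne : q ⊔ Ideal.span {x₁} ≠ (⊤ : Ideal R) := by
    intro htop
    have h1 : (1 : R) ∈ q ⊔ Ideal.span {x₁} := htop ▸ Submodule.mem_top
    rw [Submodule.mem_sup] at h1
    obtain ⟨y, hy, z, hz, hyz⟩ := h1
    obtain ⟨a, rfl⟩ := Ideal.mem_span_singleton'.mp hz
    have hyT : y ∈ T := ⟨0, -a, by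
      have : y = 1 - a * x₁ := by rw [← hyz]; ring
      rw [this]; ring⟩
    exact (Set.disjoint_left.mp hqT hy) hyT
  obtain ⟨m, hm, hqm⟩ := Ideal.exists_le_maximal _ hne
  have hqm' : q < m := lt_of_le_of_ne (le_trans le_sup_left hqm)
    (by rintro rfl; exact hx₁q (hqm (le_sup_right (α := Ideal R)
      (Ideal.subset_span (Set.mem_singleton x₁)))))
  -- Build a chain of length 2 in the prime spectrum.
  have hchain : (2 : WithBot ℕ∞) ≤ ringKrullDim R := by
    let c : LTSeries (PrimeSpectrum R) :=
      ⟨2, ![⟨p, hp⟩, ⟨q, hq⟩, ⟨m, hm.isPrime⟩], by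
        intro i
        fin_cases i
        · exact hpq
        · exact hqm'⟩
    simpa [ringKrullDim, c] using Order.LTSeries.length_le_krullDim c
  have : (2 : WithBot ℕ∞) ≤ 1 := le_trans hchain h
  norm_num at this
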